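/- Let γ : ℝ → ℂ \ {0} be a continuously differentiable map which is 1-periodic, satisfies Re(γ′(s)/(i·γ(s))) > 0 for every s (equivalently, [[γ′(s)/(i·γ(s))]] < π/2 for every s, i.e. γ has finite rugosity), and has winding number 1 around the origin, i.e. ∫₀¹ γ′(s)/γ(s) ds = 2πi. Then for every complex number w with |w| = 1 there is exactly one s ∈ [0,1) such that γ(s)/|γ(s)| = w; in particular the image of γ meets every open ray from the origin in exactly one point, so the curve bounds a region star-shaped with respect to 0. -/

import Mathlib

open Complex intervalIntegral

/-- A `C¹`, 1-periodic curve in `ℂ \ {0}` of finite rugosity (`Re(γ′/(iγ)) > 0`) and winding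
number `1` around the origin meets every ray from the origin exactly once: for every `w` of
modulus one there is a unique `s ∈ [0,1)` with `γ(s)/|γ(s)| = w`; hence the curve bounds a
region star-shaped with respect to `0`. -/
theorem finite_rugosity_curve_star_shaped
    (γ : ℝ → ℂ) (hC1 : ContDiff ℝ 1 γ)
    (hper : ∀ s : ℝ, γ (s + 1) = γ s)
    (hne : ∀ s : ℝ, γ s ≠ 0)
    (hrug : ∀ s : ℝ, 0 < (deriv γ s / (Complex.I * γ s)).re)
    (hwind : (∫ s in (0 : ℝ)..1, deriv γ s / γ s) = 2 * Real.pi * Complex.I) :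
    ∀ w : ℂ, ‖w‖ = 1 →
      ∃! s : ℝ, s ∈ Set.Ico (0 : ℝ) 1 ∧ γ s / (‖γ s‖ : ℂ) = w := by
  intro w hw
  set g : ℝ → ℂ := fun s => deriv γ s / γ s with hg
  have hγc : Continuous γ := hC1.continuous
  have hdc : Continuous (deriv γ) := hC1.continuous_deriv le_rfl
  have hgc : Continuous g := hdc.div hγc hne
  set f : ℝ → ℂ := fun s => ∫ t in (0:ℝ)..s, g t with hfdef
  have hf : ∀ s, HasDerivAt f (g s) s := fun s =>
    (hgc.integral_hasStrictDerivAt 0 s).hasDerivAt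
  have hf0 : f 0 = 0 := intervalIntegral.integral_same
  -- γ s = γ 0 * exp (f s)
  have hγf : ∀ s, γ s = γ 0 * Complex.exp (f s) := by
    have hd : ∀ s, HasDerivAt γ (deriv γ s) s := fun s =>
      ((hC1.differentiable one_ne_zero) s).hasDerivAt
    have hcz : ∀ s, HasDerivAt (fun s => γ s * Complex.exp (-f s)) 0 s := by
      intro s
      have h1 : HasDerivAt (fun s => Complex.exp (-f s)) (Complex.exp (-f s) * (-g s)) s :=
        ((hf s).neg).cexp
      have h2 := (hd s).mul h1
      refine h2.congr_deriv ?_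
      have : γ s * (Complex.exp (-f s) * -g s) = -(deriv γ s * Complex.exp (-f s)) := by
        rw [hg]
        field_simp
        rw [mul_comm (γ s), mul_div_assoc, div_self (hne s), mul_one]
      rw [this]; ring
    have hconst : ∀ s, γ s * Complex.exp (-f s) = γ 0 * Complex.exp (-f 0) := fun s =>
      is_const_of_deriv_eq_zero (fun x => (hcz x).differentiableAt)
        (fun x => (hcz x).deriv) s 0
    intro s
    have h := hconst s
    rw [hf0, neg_zero, Complex.exp_zero, mul_one] at h
    calc γ s = γ s * Complex.exp (-f s) * Complex.exp (f s) := by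
          rw [mul_assoc, ← Complex.exp_add]; simp
      _ = γ 0 * Complex.exp (f s) := by rw [h]
  set θ : ℝ → ℝ := fun s => (f s).im with hθdef
  have hθd : ∀ s, HasDerivAt θ ((g s).im) s := fun s => by
    exact (Complex.imCLM.hasFDerivAt.comp_hasDerivAt s (hf s))
  have him_pos : ∀ s, 0 < (g s).im := by
    intro s
    have h : deriv γ s / (Complex.I * γ s) = -Complex.I * g s := by
      rw [hg]; field_simp [hne s]
      have hI : Complex.I * deriv γ s * (Complex.I * γ s) = -(deriv γ s * γ s) := by
        rw [mul_mul_mul_comm, Complex.I_mul_I]; ring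
      rw [Complex.I_sq]; ring
    have := hrug s
    rw [h] at this
    simpa using this
  have hmono : StrictMono θ :=
    strictMono_of_deriv_pos (fun s => by rw [(hθd s).deriv]; exact him_pos s)
  have hθ0 : θ 0 = 0 := by rw [hθdef]; simp [hf0]
  have hθ1 : θ 1 = 2 * Real.pi := by
    have : f 1 = 2 * Real.pi * Complex.I := hwind
    rw [hθdef]; simp [this]
  have hfc : Continuous f := continuous_iff_continuousAt.mpr fun s => (hf s).continuousAt
  have hθcont : Continuous θ := Complex.continuous_im.comp hfc
  -- rewrite the ray condition
  have habs : ∀ s, (‖γ s‖ : ℂ) = ‖γ 0‖ * Real.exp ((f s).re) := by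
    intro s
    rw [hγf s]
    rw [norm_mul, Complex.norm_exp]
    push_cast
    ring
  have hkey : ∀ s, γ s / (‖γ s‖ : ℂ)
      = (γ 0 / (‖γ 0‖ : ℂ)) * Complex.exp (θ s * Complex.I) := by
    intro s
    rw [habs s, hγf s]
    have hγ0 : (‖γ 0‖ : ℂ) ≠ 0 := by
      simpa using (norm_ne_zero_iff.mpr (hne 0))
    have hex : (Real.exp ((f s).re) : ℂ) ≠ 0 := by
      simpa using Real.exp_ne_zero ((f s).re)
    have hsplit : Complex.exp (f s) = Real.exp ((f s).re) * Complex.exp (θ s * Complex.I) := by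
      rw [hθdef, Complex.ofReal_exp, ← Complex.exp_add]
      congr 1
      exact (Complex.re_add_im (f s)).symm
    rw [hsplit]
    field_simp
  set c : ℂ := γ 0 / (‖γ 0‖ : ℂ) with hc
  have hγ0 : (‖γ 0‖ : ℂ) ≠ 0 := by simpa using (norm_ne_zero_iff.mpr (hne 0))
  have hcne : c ≠ 0 := div_ne_zero (hne 0) hγ0
  have hcabs : ‖c‖ = 1 := by
    rw [hc, norm_div]
    simp [hne 0]
  set w₀ : ℂ := w / c with hw₀
  have hw₀abs : ‖w₀‖ = 1 := by rw [hw₀, norm_div, hw, hcabs]; norm_num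
  have hiff : ∀ s, (γ s / (‖γ s‖ : ℂ) = w ↔ Complex.exp (θ s * Complex.I) = w₀) := by
    intro s
    rw [hkey s, hw₀]
    constructor
    · intro h; rw [← h]; field_simp
    · intro h; rw [h]; field_simp
  -- choose the target angle a ∈ [0, 2π)
  set a : ℝ := if 0 ≤ w₀.arg then w₀.arg else w₀.arg + 2 * Real.pi with ha
  have hexp_a : Complex.exp (a * Complex.I) = w₀ := by
    have harg : Complex.exp (w₀.arg * Complex.I) = w₀ := by
      have := Complex.norm_mul_exp_arg_mul_I w₀
      rwa [hw₀abs, Complex.ofReal_one, one_mul] at this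
    rw [ha]
    split_ifs with h
    · exact harg
    · push_cast
      rw [add_mul, Complex.exp_add, harg]
      simp [Complex.exp_two_pi_mul_I]
  have ha0 : 0 ≤ a := by
    rw [ha]; split_ifs with h
    · exact h
    · nlinarith [Complex.neg_pi_lt_arg w₀, Real.pi_pos]
  have ha2 : a < 2 * Real.pi := by
    rw [ha]; split_ifs with h
    · nlinarith [Complex.arg_le_pi w₀, Real.pi_pos]
    · push_neg at h; linarith
  -- existence by IVT
  have hIVT : a ∈ Set.Icc (θ 0) (θ 1) := by
    rw [hθ0, hθ1]; exact ⟨ha0, le_of_lt ha2⟩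
  obtain ⟨s, hs01, hθs⟩ := intermediate_value_Icc (by norm_num : (0:ℝ) ≤ 1)
    (hθcont.continuousOn) hIVT
  have hslt : s < 1 := by
    rcases lt_or_eq_of_le hs01.2 with h | h
    · exact h
    · exfalso; rw [h] at hθs; rw [hθ1] at hθs; linarith
  refine ⟨s, ⟨⟨hs01.1, hslt⟩, ?_⟩, ?_⟩
  · rw [hiff s, hθs, hexp_a]
  · rintro y ⟨⟨hy0, hy1⟩, hyeq⟩
    rw [hiff y] at hyeq
    have hseq : Complex.exp (θ s * Complex.I) = w₀ := by rw [hθs, hexp_a]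
    rw [← hseq] at hyeq
    obtain ⟨n, hn⟩ := Complex.exp_eq_exp_iff_exists_int.mp hyeq
    have him : θ y = θ s + (n : ℝ) * (2 * Real.pi) := by
      have h := congrArg Complex.im hn
      simpa [Complex.add_im, Complex.mul_im, Complex.mul_re] using h
    have hbnd : ∀ t, 0 ≤ t → t < 1 → 0 ≤ θ t ∧ θ t < 2 * Real.pi := by
      intro t ht0 ht1
      constructor
      · rw [← hθ0]; exact hmono.le_iff_le.mpr ht0
      · rw [← hθ1]; exact hmono ht1
    obtain ⟨hy0', hy1'⟩ := hbnd y hy0 hy1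
    obtain ⟨hs0', hs1'⟩ := hbnd s hs01.1 hslt
    have h2π : (0:ℝ) < 2 * Real.pi := by positivity
    have hn0 : n = 0 := by
      by_contra hne0
      have h1 : (1:ℝ) ≤ |(n:ℝ)| := by exact_mod_cast Int.one_le_abs hne0
      have habsd : |θ y - θ s| < 2 * Real.pi := by
        rw [abs_sub_lt_iff]; constructor <;> linarith
      have heq : |θ y - θ s| = |(n:ℝ)| * (2 * Real.pi) := by
        rw [him, show θ s + (n:ℝ) * (2 * Real.pi) - θ s = (n:ℝ) * (2 * Real.pi) by ring,
          abs_mul, abs_of_pos h2π]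
      nlinarith
    rw [hn0] at him
    simp at him
    exact hmono.injective him
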